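/- Let E = h ⊗ A be a free Hilbert A-bimodule with G-twist u, and f, g ∈ E_∘ written as f = Σ_i f_i γ_i, g = Σ_h g_h γ'_h, satisfying the mutual freeness condition '⋈_∘': [γ_i, γ'_h] = 0, u_{γ_i} g_h = g_h, and u_{γ'_h} f_i = f_i for all i, h. Then the fermionic creation operators anticommute: a_-^*(f) a_-^*(g) + a_-^*(g) a_-^*(f) = 0 on F_-(E). -/

import Mathlib

open scoped InnerProductSpace

/-- Let `E = h ⊗ A` be a free Hilbert `A`-bimodule with `G`-twist `u`,
and `f, g ∈ E₀` written as `f = Σ_i f_i γ_i`, `g = Σ_j g_j γ'_j` (with `f_i, g_j ∈ h`,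
`γ_i, γ'_j ∈ G`) satisfying the mutual freeness condition `⋈₀`: `[γ_i, γ'_j] = 0`,
`u_{γ_i} g_j = g_j` and `u_{γ'_j} f_i = f_i` for all `i, j`.  Then the fermionic creation
operators `a₋*(f) = Σ_i a₋*(f_i) λ(γ_i)` and `a₋*(g) = Σ_j a₋*(g_j) λ(γ'_j)` anticommute
on the fermionic Fock bimodule `F₋(E)` (here `F`). -/
theorem statement15 {A : Type*} [CStarAlgebra A]
    {h : Type*} [NormedAddCommGroup h] [InnerProductSpace ℂ h]
    -- G ⊆ U(A) a group of unitaries, u : G → U(h) the twist (a group morphism)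
    (G : Set A) (hG_unit : ∀ γ ∈ G, γ ∈ unitary A) (hG_one : (1 : A) ∈ G)
    (hG_mul : ∀ γ ∈ G, ∀ γ' ∈ G, γ * γ' ∈ G) (hG_star : ∀ γ ∈ G, star γ ∈ G)
    (u : A → (h ≃ₗᵢ[ℂ] h))
    (hu_mul : ∀ γ ∈ G, ∀ γ' ∈ G, ∀ w : h, u (γ * γ') w = u γ (u γ' w))
    (hu_one : ∀ w : h, u 1 w = w)
    (hu_star : ∀ γ ∈ G, ∀ w : h, u (star γ) w = (u γ).symm w)
    -- the fermionic Fock bimodule F = F₋(E) with left action, creation and annihilation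
    {F : Type*} [NormedAddCommGroup F] [NormedSpace ℂ F]
    (lact : A → F →L[ℂ] F) (ann crt : h → F →L[ℂ] F)
    (lact_mul : ∀ a b : A, lact (a * b) = lact a ∘L lact b)
    (lact_one : lact 1 = ContinuousLinearMap.id ℂ F)
    -- the CAR for vectors of h
    (car_crt : ∀ v w : h, crt v ∘L crt w + crt w ∘L crt v = 0)
    (car_ann : ∀ v w : h, ann v ∘L ann w + ann w ∘L ann v = 0)
    (car_mixed : ∀ v w : h,
      ann v ∘L crt w + crt w ∘L ann v = ⟪v, w⟫_ℂ • ContinuousLinearMap.id ℂ F)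
    -- the twist intertwining relations (Lemma on twists)
    (twist_crt : ∀ γ ∈ G, ∀ v : h, lact γ ∘L crt v = crt (u γ v) ∘L lact γ)
    (twist_ann : ∀ γ ∈ G, ∀ v : h, lact γ ∘L ann ((u γ).symm v) = ann v ∘L lact γ)
    -- f = Σ_i f_i γ_i and g = Σ_j g_j γ'_j in E₀
    (m m' : ℕ) (f : Fin m → h) (γ : Fin m → A) (hγ : ∀ i, γ i ∈ G)
    (g : Fin m' → h) (γ' : Fin m' → A) (hγ' : ∀ j, γ' j ∈ G)
    -- the mutual freeness condition f ⋈₀ g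
    (h_comm : ∀ i j, Commute (γ i) (γ' j))
    (h_ug : ∀ i j, u (γ i) (g j) = g j)
    (h_uf : ∀ i j, u (γ' j) (f i) = f i) :
    (∑ i, crt (f i) ∘L lact (γ i)) ∘L (∑ j, crt (g j) ∘L lact (γ' j)) +
      (∑ j, crt (g j) ∘L lact (γ' j)) ∘L (∑ i, crt (f i) ∘L lact (γ i)) = 0 := by

  have key : ∀ i j, (crt (f i) ∘L lact (γ i)) ∘L (crt (g j) ∘L lact (γ' j)) +
      (crt (g j) ∘L lact (γ' j)) ∘L (crt (f i) ∘L lact (γ i)) = 0 := by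
    intro i j
    have h1 : lact (γ i) ∘L crt (g j) = crt (g j) ∘L lact (γ i) := by
      simpa [h_ug i j] using twist_crt (γ i) (hγ i) (g j)
    have h2 : lact (γ' j) ∘L crt (f i) = crt (f i) ∘L lact (γ' j) := by
      simpa [h_uf i j] using twist_crt (γ' j) (hγ' j) (f i)
    have hl : lact (γ i) ∘L lact (γ' j) = lact (γ' j) ∘L lact (γ i) := by
      rw [← lact_mul, ← lact_mul, (h_comm i j).eq]
    have p1 : ∀ y, lact (γ i) (crt (g j) y) = crt (g j) (lact (γ i) y) := fun y => by
      simpa using DFunLike.congr_fun h1 y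
    have p2 : ∀ y, lact (γ' j) (crt (f i) y) = crt (f i) (lact (γ' j) y) := fun y => by
      simpa using DFunLike.congr_fun h2 y
    have p3 : ∀ y, lact (γ i) (lact (γ' j) y) = lact (γ' j) (lact (γ i) y) := fun y => by
      simpa using DFunLike.congr_fun hl y
    have p4 : ∀ y, crt (f i) (crt (g j) y) + crt (g j) (crt (f i) y) = 0 := fun y => by
      simpa using DFunLike.congr_fun (car_crt (f i) (g j)) y
    ext x
    simp only [ContinuousLinearMap.add_apply, ContinuousLinearMap.comp_apply,
      ContinuousLinearMap.zero_apply]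
    rw [p1, p2, ← p3]
    exact p4 _
  have expand : ∀ (n n' : ℕ) (T : Fin n → F →L[ℂ] F) (S : Fin n' → F →L[ℂ] F),
      (∑ i, T i) ∘L (∑ j, S j) = ∑ i, ∑ j, T i ∘L S j := by
    intro n n' T S
    ext x
    simp [ContinuousLinearMap.sum_apply, map_sum]
    exact Finset.sum_comm
  rw [expand, expand, Finset.sum_comm (s := Finset.univ) (t := Finset.univ)
    (f := fun j i => (crt (g j) ∘L lact (γ' j)) ∘L (crt (f i) ∘L lact (γ i))),
    ← Finset.sum_add_distrib]
  refine Finset.sum_eq_zero fun i _ => ?_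
  rw [← Finset.sum_add_distrib]
  exact Finset.sum_eq_zero fun j _ => key i j
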